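/- For the Pauli-6 POVM and any Pauli matrix P, the sum Σ_a M_a · ⟨ψ_a| 3P |ψ_a⟩² = 3·I, where M_a = (1/3)|ψ_a⟩⟨ψ_a| ranges over the six Pauli eigenstates. Consequently, for a k-local tensor-product Pauli observable O = P₁⊗…⊗P_k⊗I^⊗(n−k), the single-shadow estimator has second moment at most 3^k for every n-qubit density matrix ρ. -/
import Mathlib


open Matrix Complex
open scoped ComplexOrder

noncomputable def ket0 : Fin 2 → ℂ := ![1, 0]
noncomputable def ket1 : Fin 2 → ℂ := ![0, 1]
noncomputable def ketP : Fin 2 → ℂ := ![(Real.sqrt 2)⁻¹, (Real.sqrt 2)⁻¹]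
noncomputable def ketM : Fin 2 → ℂ := ![(Real.sqrt 2)⁻¹, -(Real.sqrt 2)⁻¹]
noncomputable def ketL : Fin 2 → ℂ := ![(Real.sqrt 2)⁻¹, Complex.I * (Real.sqrt 2)⁻¹]
noncomputable def ketR : Fin 2 → ℂ := ![(Real.sqrt 2)⁻¹, -Complex.I * (Real.sqrt 2)⁻¹]

/-- The rank-one projector |ψ⟩⟨ψ|. -/
noncomputable def proj (ψ : Fin 2 → ℂ) : Matrix (Fin 2) (Fin 2) ℂ :=
  Matrix.vecMulVec ψ (star ψ)

noncomputable def sx : Matrix (Fin 2) (Fin 2) ℂ := !![0, 1; 1, 0]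
noncomputable def sy : Matrix (Fin 2) (Fin 2) ℂ := !![0, -Complex.I; Complex.I, 0]
noncomputable def sz : Matrix (Fin 2) (Fin 2) ℂ := !![1, 0; 0, -1]

/-- The six Pauli eigenstates. -/
noncomputable def ψ6 : Fin 6 → (Fin 2 → ℂ) := ![ket0, ket1, ketP, ketM, ketL, ketR]

/-- The Pauli-6 POVM elements. -/
noncomputable def M6 (a : Fin 6) : Matrix (Fin 2) (Fin 2) ℂ := (3 : ℂ)⁻¹ • proj (ψ6 a)

/-- The inverse of the Pauli-6 measurement channel: `M⁻¹(X) = 3X − tr(X)·I`. -/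
noncomputable def Minv (X : Matrix (Fin 2) (Fin 2) ℂ) : Matrix (Fin 2) (Fin 2) ℂ :=
  (3 : ℂ) • X - X.trace • 1

/-- The n-fold tensor product of single-qubit matrices, as a matrix indexed by
`Fin n → Fin 2`. -/
noncomputable def nfold {n : ℕ} (f : Fin n → Matrix (Fin 2) (Fin 2) ℂ) :
    Matrix (Fin n → Fin 2) (Fin n → Fin 2) ℂ :=
  Matrix.of fun i j => ∏ t, f t (i t) (j t)

lemma sq2 : ((Real.sqrt 2 : ℝ) : ℂ)⁻¹ * ((Real.sqrt 2 : ℝ) : ℂ)⁻¹ = 2⁻¹ := by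
  rw [← mul_inv, ← Complex.ofReal_mul, Real.mul_self_sqrt (by norm_num)]
  norm_num

lemma sqrt2_sq : ((Real.sqrt 2 : ℝ) : ℂ) ^ 2 = 2 := by
  rw [sq, ← Complex.ofReal_mul, Real.mul_self_sqrt (by norm_num)]; norm_num

lemma proj_ket0 : proj ket0 = !![1,0;0,0] := by
  ext i j; fin_cases i <;> fin_cases j <;>
    simp [proj, ket0, vecMulVec_apply]

lemma proj_ket1 : proj ket1 = !![0,0;0,1] := by
  ext i j; fin_cases i <;> fin_cases j <;>
    simp [proj, ket1, vecMulVec_apply]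

lemma proj_ketP : proj ketP = !![2⁻¹,2⁻¹;2⁻¹,2⁻¹] := by
  ext i j; fin_cases i <;> fin_cases j <;>
    simp [proj, ketP, vecMulVec_apply, sq2]

lemma proj_ketM : proj ketM = !![2⁻¹,-2⁻¹;-2⁻¹,2⁻¹] := by
  ext i j; fin_cases i <;> fin_cases j <;>
    simp [proj, ketM, vecMulVec_apply, sq2]

lemma proj_ketL : proj ketL = !![2⁻¹, -(Complex.I/2); Complex.I/2, 2⁻¹] := by
  ext i j; fin_cases i <;> fin_cases j <;>
    simp [proj, ketL, vecMulVec_apply, sq2] <;> ring_nf <;>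
    simp [sqrt2_sq] <;> ring

lemma proj_ketR : proj ketR = !![2⁻¹, Complex.I/2; -(Complex.I/2), 2⁻¹] := by
  ext i j; fin_cases i <;> fin_cases j <;>
    simp [proj, ketR, vecMulVec_apply, sq2] <;> ring_nf <;>
    simp [sqrt2_sq] <;> ring

lemma bra (A : Matrix (Fin 2) (Fin 2) ℂ) (ψ : Fin 2 → ℂ) :
    star ψ ⬝ᵥ A.mulVec ψ = (A * proj ψ).trace := by
  simp [dotProduct, mulVec, Matrix.mul_apply, Matrix.trace, Matrix.diag, proj,
    vecMulVec_apply, Finset.mul_sum, Finset.sum_mul, Pi.star_apply]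
  ring

lemma ψ6_0 : ψ6 0 = ket0 := rfl

lemma ψ6_1 : ψ6 1 = ket1 := rfl

lemma ψ6_2 : ψ6 2 = ketP := rfl

lemma ψ6_3 : ψ6 3 = ketM := rfl

lemma ψ6_4 : ψ6 4 = ketL := rfl

lemma ψ6_5 : ψ6 5 = ketR := rfl

lemma trace_mul_fin_two (A B : Matrix (Fin 2) (Fin 2) ℂ) :
    (A * B).trace = A 0 0 * B 0 0 + A 0 1 * B 1 0 + (A 1 0 * B 0 1 + A 1 1 * B 1 1) := by
  simp [Matrix.trace_fin_two, Matrix.mul_apply, Fin.sum_univ_two]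

lemma key1 (Q : Matrix (Fin 2) (Fin 2) ℂ) (hQ : Q = sx ∨ Q = sy ∨ Q = sz) :
    ∑ a : Fin 6,
      (star (ψ6 a) ⬝ᵥ ((3 : ℂ) • Q).mulVec (ψ6 a)) ^ 2 • M6 a
        = (3 : ℂ) • (1 : Matrix (Fin 2) (Fin 2) ℂ) := by
  simp only [bra, Fin.sum_univ_six, M6, ψ6_0, ψ6_1, ψ6_2, ψ6_3, ψ6_4, ψ6_5]
  simp only [proj_ket0, proj_ket1, proj_ketP, proj_ketM, proj_ketL, proj_ketR]
  rcases hQ with h|h|h <;> subst h <;>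
    simp only [trace_mul_fin_two, Matrix.smul_apply, sx, sy, sz,
      Matrix.cons_val', Matrix.cons_val_zero, Matrix.cons_val_one, Matrix.head_cons,
      Matrix.head_fin_const, Matrix.empty_val', Matrix.cons_val_fin_one,
      Matrix.of_apply, smul_eq_mul] <;>
    norm_num <;>
    (ext i j; fin_cases i <;> fin_cases j <;>
      simp [Matrix.smul_apply, Matrix.add_apply, Matrix.one_apply] <;> ring_nf <;>
      norm_num [Complex.I_sq])

lemma trace_minv (X : Matrix (Fin 2) (Fin 2) ℂ) (Q : Matrix (Fin 2) (Fin 2) ℂ) :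
    (Q * Minv X).trace = 3 * (Q * X).trace - X.trace * Q.trace := by
  rw [Minv, Matrix.mul_sub, Matrix.mul_smul, Matrix.mul_smul, Matrix.mul_one]
  simp [Matrix.trace_sub, Matrix.trace_smul, smul_eq_mul]

lemma site_pauli (Q : Matrix (Fin 2) (Fin 2) ℂ) (hQ : Q = sx ∨ Q = sy ∨ Q = sz) :
    ∑ a : Fin 6, ((Q * Minv (proj (ψ6 a))).trace) ^ 2 • M6 a
      = (3 : ℂ) • (1 : Matrix (Fin 2) (Fin 2) ℂ) := by
  have hQtr : Q.trace = 0 := by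
    rcases hQ with h | h | h <;> subst h <;> simp [sx, sy, sz, Matrix.trace_fin_two]
  have h : ∀ a : Fin 6, (Q * Minv (proj (ψ6 a))).trace
      = star (ψ6 a) ⬝ᵥ ((3 : ℂ) • Q).mulVec (ψ6 a) := by
    intro a
    rw [bra, trace_minv, hQtr, Matrix.smul_mul, Matrix.trace_smul, smul_eq_mul]
    ring
  simp_rw [h]
  exact key1 Q hQ

lemma trace_proj : ∀ a : Fin 6, (proj (ψ6 a)).trace = 1
  | 0 => by simp [ψ6_0, proj_ket0, Matrix.trace_fin_two]
  | 1 => by simp [ψ6_1, proj_ket1, Matrix.trace_fin_two]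
  | 2 => by simp [ψ6_2, proj_ketP, Matrix.trace_fin_two]; norm_num
  | 3 => by simp [ψ6_3, proj_ketM, Matrix.trace_fin_two]; norm_num
  | 4 => by simp [ψ6_4, proj_ketL, Matrix.trace_fin_two]; norm_num
  | 5 => by simp [ψ6_5, proj_ketR, Matrix.trace_fin_two]; norm_num

lemma sum_M6 : ∑ a : Fin 6, M6 a = 1 := by
  simp only [Fin.sum_univ_six, M6, ψ6_0, ψ6_1, ψ6_2, ψ6_3, ψ6_4, ψ6_5,
    proj_ket0, proj_ket1, proj_ketP, proj_ketM, proj_ketL, proj_ketR]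
  ext i j; fin_cases i <;> fin_cases j <;>
    simp [Matrix.smul_apply, Matrix.add_apply, Matrix.one_apply] <;> norm_num

lemma site_id :
    ∑ a : Fin 6, (((1 : Matrix (Fin 2) (Fin 2) ℂ) * Minv (proj (ψ6 a))).trace) ^ 2 • M6 a
      = (1 : Matrix (Fin 2) (Fin 2) ℂ) := by
  have h : ∀ a : Fin 6, ((1 : Matrix (Fin 2) (Fin 2) ℂ) * Minv (proj (ψ6 a))).trace = 1 := by
    intro a
    rw [trace_minv, Matrix.one_mul, trace_proj]
    simp [Matrix.trace_one]
    norm_num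
  simp_rw [h, one_pow, one_smul]
  exact sum_M6

lemma nfold_mul {n : ℕ} (f g : Fin n → Matrix (Fin 2) (Fin 2) ℂ) :
    nfold f * nfold g = nfold fun t => f t * g t := by
  ext i j
  simp only [Matrix.mul_apply, nfold, Matrix.of_apply]
  rw [Fintype.prod_sum fun t b => f t (i t) b * g t b (j t)]
  exact Finset.sum_congr rfl fun m _ => (Finset.prod_mul_distrib).symm

lemma nfold_trace {n : ℕ} (f : Fin n → Matrix (Fin 2) (Fin 2) ℂ) :
    (nfold f).trace = ∏ t, (f t).trace := by
  simp only [Matrix.trace, Matrix.diag, nfold, Matrix.of_apply]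
  exact (Fintype.prod_sum fun t b => f t b b).symm

lemma nfold_smul {n : ℕ} (c : Fin n → ℂ) (f : Fin n → Matrix (Fin 2) (Fin 2) ℂ) :
    nfold (fun t => c t • f t) = (∏ t, c t) • nfold f := by
  ext i j
  simp [nfold, Matrix.smul_apply, smul_eq_mul, Finset.prod_mul_distrib]

lemma nfold_one {n : ℕ} : nfold (fun _ : Fin n => (1 : Matrix (Fin 2) (Fin 2) ℂ)) = 1 := by
  ext i j
  by_cases h : i = j
  · subst h; simp [nfold, Matrix.one_apply]
  · obtain ⟨t, ht⟩ := Function.ne_iff.mp h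
    simp only [nfold, Matrix.of_apply, Matrix.one_apply, if_neg h]
    exact Finset.prod_eq_zero (Finset.mem_univ t) (by simp [ht])

lemma sum_nfold {n : ℕ} (h : Fin n → Fin 6 → Matrix (Fin 2) (Fin 2) ℂ) :
    ∑ a : Fin n → Fin 6, nfold (fun i => h i (a i)) = nfold fun i => ∑ b, h i b := by
  ext x y
  simp only [Matrix.sum_apply, nfold, Matrix.of_apply]
  exact (Fintype.prod_sum fun i b => h i b (x i) (y i)).symm

/-- For the Pauli-6 POVM, $\sum_a M_a ⟨ψ_a|3P|ψ_a⟩^2 = 3I$ for every Pauli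
matrix $P$; consequently for a k-local tensor-product Pauli observable
$O = P_1 ⊗ ⋯ ⊗ P_k ⊗ I^{⊗(n-k)}$, the single-shadow estimator has second
moment at most $3^k$ for every n-qubit density matrix ρ. -/
theorem pauli6_second_moment_bound
    (n k : ℕ) (hk : k ≤ n) (P : Fin n → Matrix (Fin 2) (Fin 2) ℂ)
    (hPk : ∀ i : Fin n, (i : ℕ) < k → P i = sx ∨ P i = sy ∨ P i = sz)
    (hPid : ∀ i : Fin n, k ≤ (i : ℕ) → P i = 1)
    (ρ : Matrix (Fin n → Fin 2) (Fin n → Fin 2) ℂ)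
    (hρ : ρ.PosSemidef) (hρtr : ρ.trace = 1) :
    (∀ Q : Matrix (Fin 2) (Fin 2) ℂ, (Q = sx ∨ Q = sy ∨ Q = sz) →
      ∑ a : Fin 6,
        (star (ψ6 a) ⬝ᵥ ((3 : ℂ) • Q).mulVec (ψ6 a)) ^ 2 • M6 a
          = (3 : ℂ) • (1 : Matrix (Fin 2) (Fin 2) ℂ)) ∧
    ∑ a : Fin n → Fin 6,
      (ρ * nfold fun i => M6 (a i)).trace *
        ((nfold P * nfold fun i => Minv (proj (ψ6 (a i)))).trace) ^ 2
      ≤ (3 : ℂ) ^ k := by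
  refine ⟨key1, ?_⟩
  have hterm : ∀ a : Fin n → Fin 6,
      (ρ * nfold fun i => M6 (a i)).trace *
        ((nfold P * nfold fun i => Minv (proj (ψ6 (a i)))).trace) ^ 2
      = (ρ * nfold fun i => ((P i * Minv (proj (ψ6 (a i)))).trace) ^ 2 • M6 (a i)).trace := by
    intro a
    rw [nfold_mul, nfold_trace,
      show (fun i => ((P i * Minv (proj (ψ6 (a i)))).trace) ^ 2 • M6 (a i))
        = fun i => ((((P i * Minv (proj (ψ6 (a i)))).trace) ^ 2 : ℂ) • M6 (a i)) from rfl,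
      nfold_smul, Matrix.mul_smul, Matrix.trace_smul, smul_eq_mul, ← Finset.prod_pow]
    ring
  simp_rw [hterm]
  rw [← Matrix.trace_sum, ← Finset.mul_sum,
    sum_nfold fun i b => (P i * Minv (proj (ψ6 b))).trace ^ 2 • M6 b]
  have hsite : ∀ i : Fin n,
      (∑ b : Fin 6, ((P i * Minv (proj (ψ6 b))).trace) ^ 2 • M6 b)
        = (if (i : ℕ) < k then (3 : ℂ) else 1) • 1 := by
    intro i
    by_cases h : (i : ℕ) < k
    · rw [if_pos h]; exact site_pauli (P i) (hPk i h)
    · rw [if_neg h, hPid i (le_of_not_gt h), one_smul]; exact site_id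
  simp_rw [hsite]
  rw [show (fun i : Fin n => (if (i : ℕ) < k then (3 : ℂ) else 1) • (1 : Matrix (Fin 2) (Fin 2) ℂ))
      = fun i : Fin n => ((if (i : ℕ) < k then (3 : ℂ) else 1) • (1 : Matrix (Fin 2) (Fin 2) ℂ)) from rfl,
    nfold_smul, nfold_one]
  have hprod : (∏ i : Fin n, (if (i : ℕ) < k then (3 : ℂ) else 1)) = 3 ^ k := by
    rw [Fin.prod_univ_eq_prod_range (fun i => if i < k then (3 : ℂ) else 1) n,
      ← Finset.prod_range_mul_prod_Ico _ hk,
      Finset.prod_congr rfl fun i hi => if_pos (Finset.mem_range.mp hi),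
      Finset.prod_const, Finset.card_range,
      Finset.prod_congr rfl fun i hi => if_neg (not_lt.mpr (Finset.mem_Ico.mp hi).1),
      Finset.prod_const, one_pow, mul_one]
  rw [hprod, Matrix.mul_smul, Matrix.mul_one, Matrix.trace_smul, smul_eq_mul, hρtr, mul_one]
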